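/- Let (M,d) be a metric space, x ∈ M, r > 0, and let e : M → ℝ be a nonnegative function that is bounded above on the open metric ball B(x, r/2). Suppose σ₀ ∈ [0, r/2] maximizes the function σ ↦ (r − 2σ)² · sup_{B(x,σ)} e over σ ∈ [0, r/2] (with the convention that the supremum over the empty ball is 0). Set e₀ = sup_{B(x,σ₀)} e and ρ₀ = (r − 2σ₀)/4. Then σ₀ + ρ₀ ≤ r/2 and sup_{B(x, σ₀ + ρ₀)} e ≤ 4·e₀. -/
import Mathlib


/-- Point-picking estimate (first step in the quantitative Schoen–Uhlenbeck
small-energy estimate): if `σ₀ ∈ [0, r/2]` maximizes `σ ↦ (r - 2σ)² · sup_{B(x,σ)} e`,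
then with `e₀ = sup_{B(x,σ₀)} e` and `ρ₀ = (r - 2σ₀)/4` one has `σ₀ + ρ₀ ≤ r/2`
and `sup_{B(x, σ₀ + ρ₀)} e ≤ 4 e₀`.  Suprema over balls are taken via `sSup` of
the image, which is `0` for the empty ball (the real `sSup` convention). -/
theorem point_picking_estimate
    {M : Type*} [MetricSpace M] (x : M) (r : ℝ) (hr : 0 < r)
    (e : M → ℝ) (hnonneg : ∀ y, 0 ≤ e y)
    (hbdd : BddAbove (e '' Metric.ball x (r / 2)))
    (σ₀ : ℝ) (hσ₀ : σ₀ ∈ Set.Icc 0 (r / 2))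
    (hmax : ∀ σ ∈ Set.Icc 0 (r / 2),
      (r - 2 * σ) ^ 2 * sSup (e '' Metric.ball x σ) ≤
        (r - 2 * σ₀) ^ 2 * sSup (e '' Metric.ball x σ₀)) :
    σ₀ + (r - 2 * σ₀) / 4 ≤ r / 2 ∧
      sSup (e '' Metric.ball x (σ₀ + (r - 2 * σ₀) / 4)) ≤
        4 * sSup (e '' Metric.ball x σ₀) := by
  obtain ⟨h0, h1⟩ := hσ₀
  have hle : σ₀ + (r - 2 * σ₀) / 4 ≤ r / 2 := by linarith
  refine ⟨hle, ?_⟩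
  set σ₁ := σ₀ + (r - 2 * σ₀) / 4 with hσ₁
  have hσ₁mem : σ₁ ∈ Set.Icc 0 (r / 2) := ⟨by simp only [hσ₁]; linarith, hle⟩
  have hkey := hmax σ₁ hσ₁mem
  have hS₀ : 0 ≤ sSup (e '' Metric.ball x σ₀) :=
    Real.sSup_nonneg (by rintro y ⟨z, _, rfl⟩; exact hnonneg z)
  rcases eq_or_lt_of_le h1 with heq | hlt
  · have : σ₁ = σ₀ := by rw [hσ₁, heq]; ring
    rw [this]; linarith
  · have hpos : 0 < r - 2 * σ₀ := by linarith
    have hrw : r - 2 * σ₁ = (r - 2 * σ₀) / 2 := by rw [hσ₁]; ring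
    rw [hrw] at hkey
    nlinarith [sq_nonneg (r - 2 * σ₀), mul_pos hpos hpos]
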